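/- Kantorovich–Rubinstein duality: for Borel probability measures μ and ν on a compact metric space X, the 1-Wasserstein (Earth-Mover) distance satisfies W₁(μ, ν) = sup { ∫ g dμ − ∫ g dν : g : X → ℝ is 1-Lipschitz }. -/

import Mathlib

open MeasureTheory Measure Set
open scoped ENNReal NNReal

set_option linter.unusedSectionVars false
set_option linter.unusedVariables false

noncomputable section

/-- `γ` is a coupling of `μ` and `ν`. -/
def IsCoupling {X Y : Type*} [MeasurableSpace X] [MeasurableSpace Y]
    (γ : Measure (X × Y)) (μ : Measure X) (ν : Measure Y) : Prop :=
  γ.map Prod.fst = μ ∧ γ.map Prod.snd = ν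

/-- The `p`-Wasserstein distance associated to the cost `d`. -/
def wassersteinDist {X : Type*} [MeasurableSpace X] (d : X → X → ℝ) (p : ℝ)
    (μ ν : Measure X) : ℝ :=
  (sInf { c : ℝ | ∃ γ : Measure (X × X), IsProbabilityMeasure γ ∧ IsCoupling γ μ ν ∧
      c = ∫ z, d z.1 z.2 ^ p ∂γ }) ^ (1 / p)

namespace KRproof

variable {X : Type*} [MetricSpace X] [CompactSpace X]
  [MeasurableSpace X] [BorelSpace X]

lemma cont_integrable {Y : Type*} [TopologicalSpace Y] [CompactSpace Y] [MeasurableSpace Y]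
    [OpensMeasurableSpace Y] (μ : Measure Y) [IsFiniteMeasure μ] {f : Y → ℝ}
    (hf : Continuous f) : Integrable f μ :=
  (BoundedContinuousFunction.mkOfCompact ⟨f, hf⟩).integrable μ

variable (μ ν : Measure X) [IsProbabilityMeasure μ] [IsProbabilityMeasure ν]

def Sset : Set ℝ :=
  { r : ℝ | ∃ g : X → ℝ, LipschitzWith 1 g ∧ r = (∫ x, g x ∂μ) - ∫ x, g x ∂ν }

lemma zero_mem_Sset : (0:ℝ) ∈ Sset μ ν :=
  ⟨fun _ => 0, (LipschitzWith.const 0).weaken zero_le_one, by simp⟩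

lemma nonempty_X {Y : Type*} [MeasurableSpace Y] (m : Measure Y) [IsProbabilityMeasure m] :
    Nonempty Y := by
  by_contra h
  rw [not_nonempty_iff] at h
  have h1 : m univ = 1 := measure_univ
  have h0 : (univ : Set Y) = ∅ := univ_eq_empty_iff.mpr h
  rw [h0, measure_empty] at h1
  exact zero_ne_one h1

lemma lip_real_sub_le {g : X → ℝ} (hg : LipschitzWith 1 g) (x y : X) :
    g x - g y ≤ dist x y := by
  have h := hg.dist_le_mul x y
  rw [NNReal.coe_one, one_mul, Real.dist_eq] at h
  exact (le_abs_self _).trans h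

lemma bddAbove_Sset : BddAbove (Sset μ ν) := by
  have : Nonempty X := nonempty_X μ
  obtain ⟨x0⟩ := this
  refine ⟨2 * Metric.diam (univ : Set X), ?_⟩
  rintro r ⟨g, hg, rfl⟩
  have hgc : Continuous g := hg.continuous
  have hint1 : Integrable g μ := cont_integrable μ hgc
  have hint2 : Integrable g ν := cont_integrable ν hgc
  have hbound : ∀ x : X, |g x - g x0| ≤ Metric.diam (univ : Set X) := by
    intro x
    have h1 := lip_real_sub_le hg x x0
    have h2 := lip_real_sub_le hg x0 x
    have hd : dist x x0 ≤ Metric.diam (univ : Set X) :=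
      Metric.dist_le_diam_of_mem isCompact_univ.isBounded trivial trivial
    rw [abs_le]
    constructor
    · nlinarith [dist_comm x x0]
    · linarith
  have e1 : (∫ x, g x ∂μ) - ∫ x, g x ∂ν
      = (∫ x, (g x - g x0) ∂μ) - ∫ x, (g x - g x0) ∂ν := by
    rw [integral_sub hint1 (integrable_const _), integral_sub hint2 (integrable_const _)]
    simp [measure_univ]
  rw [e1]
  have b1 : (∫ x, (g x - g x0) ∂μ) ≤ Metric.diam (univ : Set X) := by
    calc (∫ x, (g x - g x0) ∂μ) ≤ ∫ _, Metric.diam (univ : Set X) ∂μ := by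
          apply integral_mono (hint1.sub (integrable_const _)) (integrable_const _)
          intro x
          exact (le_abs_self _).trans (hbound x)
      _ = Metric.diam (univ : Set X) := by simp [measure_univ]
  have b2 : -(Metric.diam (univ : Set X)) ≤ (∫ x, (g x - g x0) ∂ν) := by
    have hc : ∫ (_ : X), -Metric.diam (univ : Set X) ∂ν = -(Metric.diam (univ : Set X)) := by
      simp [measure_univ]
    rw [← hc]
    apply integral_mono (integrable_const _) (hint2.sub (integrable_const _))
    intro x
    exact neg_le_of_abs_le (hbound x)
  linarith

/-- the inf-side set (without the rpow) -/
def Iset : Set ℝ :=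
  { c : ℝ | ∃ γ : Measure (X × X), IsProbabilityMeasure γ ∧ IsCoupling γ μ ν ∧
      c = ∫ z, dist z.1 z.2 ∂γ }


lemma prod_is_coupling : IsCoupling (μ.prod ν) μ ν := by
  constructor
  · rw [Measure.map_fst_prod, measure_univ, one_smul]
  · rw [Measure.map_snd_prod, measure_univ, one_smul]

lemma Iset_nonempty : (Iset μ ν).Nonempty :=
  ⟨_, μ.prod ν, inferInstance, prod_is_coupling μ ν, rfl⟩

lemma Iset_nonneg : ∀ c ∈ Iset μ ν, 0 ≤ c := by
  rintro c ⟨γ, hγ, hcpl, rfl⟩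
  exact integral_nonneg fun z => dist_nonneg

lemma bddBelow_Iset : BddBelow (Iset μ ν) := ⟨0, Iset_nonneg μ ν⟩

/-- integral of a continuous function against a marginal -/
lemma integral_fst_coupling (γ : Measure (X × X)) [IsProbabilityMeasure γ]
    (hc : IsCoupling γ μ ν) {g : X → ℝ} (hg : Continuous g) :
    ∫ z : X × X, g z.1 ∂γ = ∫ x, g x ∂μ := by
  rw [← hc.1, integral_map measurable_fst.aemeasurable]
  rw [hc.1]
  exact hg.aestronglyMeasurable

lemma integral_snd_coupling (γ : Measure (X × X)) [IsProbabilityMeasure γ]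
    (hc : IsCoupling γ μ ν) {g : X → ℝ} (hg : Continuous g) :
    ∫ z : X × X, g z.2 ∂γ = ∫ x, g x ∂ν := by
  rw [← hc.2, integral_map measurable_snd.aemeasurable]
  rw [hc.2]
  exact hg.aestronglyMeasurable

/-- Easy direction: every element of `Sset` is at most every element of `Iset`. -/
lemma Sset_le_Iset : ∀ r ∈ Sset μ ν, ∀ c ∈ Iset μ ν, r ≤ c := by
  rintro r ⟨g, hg, rfl⟩ c ⟨γ, hγ, hcpl, rfl⟩
  have hgc : Continuous g := hg.continuous
  rw [← integral_fst_coupling μ ν γ hcpl hgc, ← integral_snd_coupling μ ν γ hcpl hgc]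
  have h1 : Integrable (fun z : X × X => g z.1) γ := cont_integrable γ (hgc.comp continuous_fst)
  have h2 : Integrable (fun z : X × X => g z.2) γ := cont_integrable γ (hgc.comp continuous_snd)
  rw [← integral_sub h1 h2]
  apply integral_mono (h1.sub h2) (cont_integrable γ continuous_dist)
  intro z
  exact lip_real_sub_le hg z.1 z.2

/-- `g ⊕ h : (x,y) ↦ g x + h y` as a continuous map. -/
def oplus (g h : C(X, ℝ)) : C(X × X, ℝ) :=
  ⟨fun z => g z.1 + h z.2, by fun_prop⟩

@[simp] lemma oplus_apply (g h : C(X, ℝ)) (z : X × X) : oplus g h z = g z.1 + h z.2 := rfl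

/-- the distance as a continuous map on `X × X` -/
def distMap : C(X × X, ℝ) := ⟨fun z => dist z.1 z.2, continuous_dist⟩

def Afam (f : C(X × X, ℝ)) : Set ℝ :=
  { c : ℝ | ∃ g h : C(X, ℝ), (∀ x y : X, f (x, y) ≤ g x + h y) ∧
      c = (∫ x, g x ∂μ) + ∫ y, h y ∂ν }

lemma Afam_nonempty (f : C(X × X, ℝ)) : (Afam μ ν f).Nonempty := by
  refine ⟨_, ContinuousMap.const X ‖f‖, 0, fun x y => ?_, rfl⟩
  simpa using (le_abs_self (f (x,y))).trans (f.norm_coe_le_norm (x,y))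

lemma Afam_lb (f : C(X × X, ℝ)) : ∀ c ∈ Afam μ ν f, ∫ z, f z ∂(μ.prod ν) ≤ c := by
  rintro c ⟨g, h, hle, rfl⟩
  have key : ∫ z, f z ∂(μ.prod ν) ≤ ∫ z : X × X, (g z.1 + h z.2) ∂(μ.prod ν) := by
    apply integral_mono (cont_integrable _ f.continuous)
      (cont_integrable _ (by fun_prop : Continuous fun z : X × X => g z.1 + h z.2))
    intro z; exact hle z.1 z.2
  refine key.trans ?_
  have h1 : Integrable (fun z : X × X => g z.1) (μ.prod ν) :=
    cont_integrable _ (g.continuous.comp continuous_fst)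
  have h2 : Integrable (fun z : X × X => h z.2) (μ.prod ν) :=
    cont_integrable _ (h.continuous.comp continuous_snd)
  rw [integral_add h1 h2,
    integral_fst_coupling μ ν _ (prod_is_coupling μ ν) g.continuous,
    integral_snd_coupling μ ν _ (prod_is_coupling μ ν) h.continuous]

lemma bddBelow_Afam (f : C(X × X, ℝ)) : BddBelow (Afam μ ν f) :=
  ⟨_, Afam_lb μ ν f⟩

/-- the sublinear functional -/
def pfun (f : C(X × X, ℝ)) : ℝ := sInf (Afam μ ν f)

lemma pfun_le_of_decomp {f : C(X × X, ℝ)} (g h : C(X, ℝ))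
    (hle : ∀ x y : X, f (x, y) ≤ g x + h y) :
    pfun μ ν f ≤ (∫ x, g x ∂μ) + ∫ y, h y ∂ν :=
  csInf_le (bddBelow_Afam μ ν f) ⟨g, h, hle, rfl⟩

lemma pfun_lb (f : C(X × X, ℝ)) : ∫ z, f z ∂(μ.prod ν) ≤ pfun μ ν f :=
  le_csInf (Afam_nonempty μ ν f) (Afam_lb μ ν f)

lemma pfun_zero : pfun μ ν 0 = 0 := by
  apply le_antisymm
  · simpa using pfun_le_of_decomp μ ν (f := 0) 0 0 (by simp)
  · simpa using pfun_lb μ ν 0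

lemma pfun_add (f₁ f₂ : C(X × X, ℝ)) :
    pfun μ ν (f₁ + f₂) ≤ pfun μ ν f₁ + pfun μ ν f₂ := by
  have key : ∀ c₁ ∈ Afam μ ν f₁, ∀ c₂ ∈ Afam μ ν f₂, pfun μ ν (f₁ + f₂) ≤ c₁ + c₂ := by
    rintro c₁ ⟨g₁, h₁, hle₁, rfl⟩ c₂ ⟨g₂, h₂, hle₂, rfl⟩
    have step := pfun_le_of_decomp μ ν (f := f₁ + f₂) (g₁ + g₂) (h₁ + h₂)
      (fun x y => by
        have := add_le_add (hle₁ x y) (hle₂ x y)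
        simpa [add_add_add_comm] using this)
    refine step.trans (le_of_eq ?_)
    have ig₁ : Integrable (⇑g₁) μ := cont_integrable μ g₁.continuous
    have ig₂ : Integrable (⇑g₂) μ := cont_integrable μ g₂.continuous
    have ih₁ : Integrable (⇑h₁) ν := cont_integrable ν h₁.continuous
    have ih₂ : Integrable (⇑h₂) ν := cont_integrable ν h₂.continuous
    simp only [ContinuousMap.coe_add, Pi.add_apply]
    rw [integral_add ig₁ ig₂, integral_add ih₁ ih₂]
    ring
  have step1 : ∀ c₁ ∈ Afam μ ν f₁, pfun μ ν (f₁ + f₂) - c₁ ≤ pfun μ ν f₂ := by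
    intro c₁ h₁
    apply le_csInf (Afam_nonempty μ ν f₂)
    intro c₂ h₂
    linarith [key c₁ h₁ c₂ h₂]
  have step2 : pfun μ ν (f₁ + f₂) - pfun μ ν f₂ ≤ pfun μ ν f₁ := by
    apply le_csInf (Afam_nonempty μ ν f₁)
    intro c₁ h₁
    linarith [step1 c₁ h₁]
  linarith

lemma pfun_smul_le (c : ℝ) (hc : 0 < c) (f : C(X × X, ℝ)) :
    pfun μ ν (c • f) ≤ c * pfun μ ν f := by
  have H : ∀ v ∈ Afam μ ν f, pfun μ ν (c • f) / c ≤ v := by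
    rintro v ⟨g, h, hle, rfl⟩
    rw [div_le_iff₀' hc]
    have step := pfun_le_of_decomp μ ν (f := c • f) (c • g) (c • h) (fun x y => by
      simp only [ContinuousMap.coe_smul, Pi.smul_apply, smul_eq_mul]
      nlinarith [hle x y])
    refine step.trans (le_of_eq ?_)
    simp only [ContinuousMap.coe_smul, Pi.smul_apply, smul_eq_mul]
    rw [integral_const_mul, integral_const_mul]
    ring
  have h2 := le_csInf (Afam_nonempty μ ν f) H
  have h3 : pfun μ ν (c • f) ≤ pfun μ ν f * c := (div_le_iff₀ hc).mp h2
  linarith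

lemma pfun_smul (c : ℝ) (hc : 0 < c) (f : C(X × X, ℝ)) :
    pfun μ ν (c • f) = c * pfun μ ν f := by
  refine le_antisymm (pfun_smul_le μ ν c hc f) ?_
  have h2 := pfun_smul_le μ ν c⁻¹ (inv_pos.mpr hc) (c • f)
  rw [smul_smul, inv_mul_cancel₀ hc.ne', one_smul] at h2
  have h3 := mul_le_mul_of_nonneg_left h2 hc.le
  calc c * pfun μ ν f ≤ c * (c⁻¹ * pfun μ ν (c • f)) := h3
    _ = pfun μ ν (c • f) := by field_simp

lemma neg_sSup_le_pfun_negDist :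
    -(sSup (Sset μ ν)) ≤ pfun μ ν (-(distMap (X := X))) := by
  have hne : Nonempty X := nonempty_X μ
  apply le_csInf (Afam_nonempty _ _ _)
  rintro c ⟨g, h, hle, rfl⟩
  have hle' : ∀ x y : X, -(dist x y) ≤ g x + h y := by
    intro x y
    have := hle x y
    simpa [distMap] using this
  obtain ⟨ym, -, hym⟩ := isCompact_univ.exists_isMinOn univ_nonempty h.continuous.continuousOn
  set ψ : X → ℝ := fun x => ⨅ y : X, (dist x y + h y) with hψdef
  have hbdd : ∀ x : X, BddBelow (range fun y => dist x y + h y) := by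
    intro x
    refine ⟨h ym, ?_⟩
    rintro r ⟨y, rfl⟩
    have h1 : h ym ≤ h y := hym (mem_univ y)
    have h2 : (0:ℝ) ≤ dist x y := dist_nonneg
    dsimp only
    linarith
  have hψ_le_h : ∀ x, ψ x ≤ h x := by
    intro x
    have := ciInf_le (hbdd x) x
    simpa using this
  have h_negg_le : ∀ x, -g x ≤ ψ x := by
    intro x
    apply le_ciInf
    intro y
    have := hle' x y
    linarith
  have key : ∀ x x' : X, ψ x - ψ x' ≤ dist x x' := by
    intro x x'
    have hkey : ψ x - dist x x' ≤ ψ x' := by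
      apply le_ciInf
      intro y
      have h1 : ψ x ≤ dist x y + h y := ciInf_le (hbdd x) y
      have h2 := dist_triangle x x' y
      show ψ x - dist x x' ≤ dist x' y + h y
      linarith
    linarith
  have hψlip : LipschitzWith 1 ψ := by
    apply LipschitzWith.of_dist_le_mul
    intro x x'
    rw [NNReal.coe_one, one_mul, Real.dist_eq, abs_le]
    constructor
    · have := key x' x
      have hd := dist_comm x' x
      linarith
    · exact key x x'
  have hmem : (∫ x, ψ x ∂μ) - ∫ x, ψ x ∂ν ∈ Sset μ ν := ⟨ψ, hψlip, rfl⟩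
  have hψint_μ : Integrable ψ μ := cont_integrable μ hψlip.continuous
  have hψint_ν : Integrable ψ ν := cont_integrable ν hψlip.continuous
  have i1 : -(∫ x, g x ∂μ) ≤ ∫ x, ψ x ∂μ := by
    rw [← integral_neg]
    exact integral_mono (cont_integrable μ g.continuous.neg) hψint_μ h_negg_le
  have i2 : ∫ x, ψ x ∂ν ≤ ∫ y, h y ∂ν :=
    integral_mono hψint_ν (cont_integrable ν h.continuous) hψ_le_h
  have := le_csSup (bddAbove_Sset μ ν) hmem
  linarith

/-- Hahn–Banach: a positive linear functional dominated by `pfun` agreeing with it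
on the ray of `-distMap`. -/
lemma exists_functional (hnt : Nontrivial X) :
    ∃ Λ : C(X × X, ℝ) →ₗ[ℝ] ℝ, (∀ f, Λ f ≤ pfun μ ν f) ∧
      Λ (-(distMap (X := X))) = pfun μ ν (-(distMap (X := X))) := by
  have hDne : -(distMap (X := X)) ≠ 0 := by
    obtain ⟨a, b, hab⟩ := hnt
    intro h0
    have h1 : (-(distMap (X := X))) (a, b) = 0 := by rw [h0]; rfl
    have h2 : -(dist a b) = 0 := h1
    exact hab (dist_eq_zero.mp (by linarith))
  set D : C(X × X, ℝ) := -(distMap (X := X)) with hD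
  have hdom : ∀ x : (LinearPMap.mkSpanSingleton (K := ℝ) (L := ℝ) (σ := RingHom.id ℝ) D (pfun μ ν D) hDne).domain,
      (LinearPMap.mkSpanSingleton (K := ℝ) (L := ℝ) (σ := RingHom.id ℝ) D (pfun μ ν D) hDne) x ≤ pfun μ ν x := by
    rintro ⟨x, hx⟩
    obtain ⟨cc, rfl⟩ := Submodule.mem_span_singleton.mp hx
    rw [LinearPMap.mkSpanSingleton'_apply]
    rcases lt_trichotomy cc 0 with hc | hc | hc
    · have hpos : 0 < -cc := by linarith
      have h1 : pfun μ ν ((-cc) • D) = (-cc) * pfun μ ν D := pfun_smul μ ν _ hpos D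
      have h2 : pfun μ ν (cc • D + (-cc) • D) ≤ pfun μ ν (cc • D) + pfun μ ν ((-cc) • D) := by
        have := pfun_add μ ν (cc • D) ((-cc) • D)
        exact this
      have h3 : cc • D + (-cc) • D = 0 := by
        rw [← add_smul]
        simp
      rw [h3, pfun_zero] at h2
      rw [h1] at h2
      simp only [smul_eq_mul, RingHom.id_apply]
      linarith
    · subst hc
      simp [pfun_zero μ ν]
    · rw [pfun_smul μ ν cc hc D]
      simp
  obtain ⟨Λ, hΛeq, hΛle⟩ := exists_extension_of_le_sublinear
    (LinearPMap.mkSpanSingleton (K := ℝ) (L := ℝ) (σ := RingHom.id ℝ) D (pfun μ ν D) hDne) (pfun μ ν)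
    (fun c hc x => pfun_smul μ ν c hc x) (pfun_add μ ν) hdom
  refine ⟨Λ, hΛle, ?_⟩
  have := hΛeq ⟨D, Submodule.mem_span_singleton_self D⟩
  rw [this]
  exact LinearPMap.mkSpanSingleton_apply ℝ ℝ hDne _

section Functional

variable {μ ν} (Λ : C(X × X, ℝ) →ₗ[ℝ] ℝ)

lemma Λ_nonneg (hΛ : ∀ f, Λ f ≤ pfun μ ν f) {f : C(X × X, ℝ)} (hf : ∀ z, 0 ≤ f z) : 0 ≤ Λ f := by
  have h1 : Λ (-f) ≤ pfun μ ν (-f) := hΛ (-f)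
  have h2 : pfun μ ν (-f) ≤ 0 := by
    have := pfun_le_of_decomp μ ν (f := -f) 0 0 (fun x y => by
      have := hf (x, y)
      simp only [ContinuousMap.coe_neg, Pi.neg_apply, ContinuousMap.coe_zero, Pi.zero_apply]
      linarith)
    simpa using this
  have h3 : Λ (-f) = -Λ f := map_neg Λ f
  linarith

lemma Λ_mono (hΛ : ∀ f, Λ f ≤ pfun μ ν f) {f g : C(X × X, ℝ)} (hfg : ∀ z, f z ≤ g z) : Λ f ≤ Λ g := by
  have h1 : 0 ≤ Λ (g - f) := Λ_nonneg Λ hΛ (fun z => by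
    simp only [ContinuousMap.coe_sub, Pi.sub_apply]
    linarith [hfg z])
  have h2 : Λ (g - f) = Λ g - Λ f := map_sub Λ g f
  linarith

lemma Λ_oplus (hΛ : ∀ f, Λ f ≤ pfun μ ν f) (g h : C(X, ℝ)) :
    Λ (oplus g h) = (∫ x, g x ∂μ) + ∫ y, h y ∂ν := by
  have h1 : Λ (oplus g h) ≤ (∫ x, g x ∂μ) + ∫ y, h y ∂ν :=
    (hΛ _).trans (pfun_le_of_decomp μ ν g h (fun x y => le_refl _))
  have h2 : Λ (-(oplus g h)) ≤ (∫ x, (-g) x ∂μ) + ∫ y, (-h) y ∂ν := by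
    have hEq : -(oplus g h) = oplus (-g) (-h) := by
      ext z
      simp [oplus]
      ring
    rw [hEq]
    exact (hΛ _).trans (pfun_le_of_decomp μ ν (-g) (-h) (fun x y => le_refl _))
  have h3 : Λ (-(oplus g h)) = -Λ (oplus g h) := map_neg Λ _
  have h4 : ∫ x, (-g) x ∂μ = -∫ x, g x ∂μ := by
    simp only [ContinuousMap.coe_neg, Pi.neg_apply]
    exact integral_neg _
  have h5 : ∫ y, (-h) y ∂ν = -∫ y, h y ∂ν := by
    simp only [ContinuousMap.coe_neg, Pi.neg_apply]
    exact integral_neg _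
  rw [h3, h4, h5] at h2
  linarith

end Functional

section PartitionOfUnity

variable (δ : ℝ) (s : Finset X)

/-- bump function at `i` -/
def bump (i : X) : X → ℝ := fun x => max (δ - dist x i) 0

lemma bump_cont (i : X) : Continuous (bump δ i) :=
  ((continuous_const.sub (continuous_id.dist continuous_const)).max continuous_const)

lemma bump_nonneg (i : X) (x : X) : 0 ≤ bump δ i x := le_max_right _ _

lemma bump_eq_zero (i : X) {x : X} (hx : δ ≤ dist x i) : bump δ i x = 0 :=
  max_eq_right (by linarith)

lemma bump_pos (i : X) {x : X} (hx : dist x i < δ) : 0 < bump δ i x :=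
  lt_max_iff.mpr (Or.inl (by linarith))

/-- sum of bump functions -/
def Fsum : X → ℝ := fun x => ∑ i ∈ s, bump δ i x

lemma Fsum_cont : Continuous (Fsum δ s) :=
  continuous_finset_sum s (fun i _ => bump_cont δ i)

lemma Fsum_pos (hcov : ∀ x : X, ∃ i ∈ s, dist x i < δ) (x : X) : 0 < Fsum δ s x := by
  obtain ⟨i, hi, hdi⟩ := hcov x
  exact Finset.sum_pos' (fun j _ => bump_nonneg δ j x) ⟨i, hi, bump_pos δ i hdi⟩

/-- partition of unity -/
def φn (i : X) : X → ℝ := fun x => bump δ i x / Fsum δ s x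

lemma φn_cont (hcov : ∀ x : X, ∃ i ∈ s, dist x i < δ) (i : X) : Continuous (φn δ s i) :=
  (bump_cont δ i).div (Fsum_cont δ s) (fun x => (Fsum_pos δ s hcov x).ne')

lemma φn_nonneg (hcov : ∀ x : X, ∃ i ∈ s, dist x i < δ) (i : X) (x : X) : 0 ≤ φn δ s i x :=
  div_nonneg (bump_nonneg δ i x) (Fsum_pos δ s hcov x).le

lemma φn_sum_eq_one (hcov : ∀ x : X, ∃ i ∈ s, dist x i < δ) (x : X) :
    ∑ i ∈ s, φn δ s i x = 1 := by
  rw [show ∑ i ∈ s, φn δ s i x = (∑ i ∈ s, bump δ i x) / Fsum δ s x from (Finset.sum_div _ _ _).symm]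
  exact div_self (Fsum_pos δ s hcov x).ne'

lemma φn_support (i : X) {x : X} (h : φn δ s i x ≠ 0) : dist x i < δ := by
  by_contra hc
  push_neg at hc
  exact h (by rw [φn, bump_eq_zero δ i hc, zero_div])

lemma φn_le_one (hcov : ∀ x : X, ∃ i ∈ s, dist x i < δ) (i : X) (hi : i ∈ s) (x : X) : φn δ s i x ≤ 1 := by
  rw [φn, div_le_one (Fsum_pos δ s hcov x)]
  exact Finset.single_le_sum (fun j _ => bump_nonneg δ j x) hi

end PartitionOfUnity

lemma exists_net {δ : ℝ} (hδ : 0 < δ) : ∃ s : Finset X, ∀ x : X, ∃ i ∈ s, dist x i < δ := by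
  obtain ⟨t, htf, hcover⟩ := (Metric.totallyBounded_iff.mp
    (isCompact_univ : IsCompact (univ : Set X)).totallyBounded) δ hδ
  refine ⟨htf.toFinset, fun x => ?_⟩
  obtain ⟨i, hi, hxi⟩ := mem_iUnion₂.mp (hcover (mem_univ x))
  exact ⟨i, htf.mem_toFinset.mpr hi, Metric.mem_ball.mp hxi⟩

lemma cmSum_apply {Y : Type*} [TopologicalSpace Y] {ι : Type*} (s : Finset ι)
    (f : ι → C(Y, ℝ)) (z : Y) : (∑ i ∈ s, f i) z = ∑ i ∈ s, f i z := by
  classical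
  induction s using Finset.induction_on with
  | empty => simp
  | insert _ _ h ih => rw [Finset.sum_insert h, Finset.sum_insert h, ContinuousMap.add_apply, ih]

lemma build_coupling (δ : ℝ) (hδ : 0 < δ) (s : Finset X) (φ : X → X → ℝ)
    (φcont : ∀ i, Continuous (φ i)) (φ0 : ∀ i x, 0 ≤ φ i x)
    (φsum : ∀ x, ∑ i ∈ s, φ i x = 1)
    (φsupp : ∀ i x, φ i x ≠ 0 → dist x i < δ)
    (t : X → X → ℝ) (t0 : ∀ i j, 0 ≤ t i j)
    (hrow : ∀ i ∈ s, ∑ j ∈ s, t i j = ∫ x, φ i x ∂μ)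
    (hcol : ∀ j ∈ s, ∑ i ∈ s, t i j = ∫ y, φ j y ∂ν) :
    ∃ γ : Measure (X × X), IsProbabilityMeasure γ ∧ IsCoupling γ μ ν ∧
      ∫ z : X × X, dist z.1 z.2 ∂γ ≤ ∑ i ∈ s, ∑ j ∈ s, t i j * (dist i j + 2 * δ) := by
  classical
  set w : X → X → ℝ≥0∞ := fun i x => ENNReal.ofReal (φ i x) with hw
  have wmeas : ∀ i, Measurable (w i) := fun i => (φcont i).measurable.ennreal_ofReal
  set μw : X → Measure X := fun i => μ.withDensity (w i) with hμw
  set νw : X → Measure X := fun j => ν.withDensity (w j) with hνw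
  have hμwuniv : ∀ i, μw i univ = ENNReal.ofReal (∫ x, φ i x ∂μ) := by
    intro i
    rw [hμw]
    dsimp only
    rw [withDensity_apply _ MeasurableSet.univ, Measure.restrict_univ]
    exact (ofReal_integral_eq_lintegral_ofReal (cont_integrable μ (φcont i))
      (Filter.Eventually.of_forall (φ0 i))).symm
  have hνwuniv : ∀ j, νw j univ = ENNReal.ofReal (∫ y, φ j y ∂ν) := by
    intro j
    rw [hνw]
    dsimp only
    rw [withDensity_apply _ MeasurableSet.univ, Measure.restrict_univ]
    exact (ofReal_integral_eq_lintegral_ofReal (cont_integrable ν (φcont j))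
      (Filter.Eventually.of_forall (φ0 j))).symm
  have hμwfin : ∀ i, IsFiniteMeasure (μw i) :=
    fun i => ⟨by rw [hμwuniv i]; exact ENNReal.ofReal_lt_top⟩
  have hνwfin : ∀ j, IsFiniteMeasure (νw j) :=
    fun j => ⟨by rw [hνwuniv j]; exact ENNReal.ofReal_lt_top⟩
  set A : X → ℝ≥0∞ := fun i => μw i univ with hA
  set B : X → ℝ≥0∞ := fun j => νw j univ with hB
  have hAtop : ∀ i, A i ≠ ∞ := fun i => by rw [hA]; dsimp only; rw [hμwuniv i]; exact ENNReal.ofReal_ne_top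
  have hBtop : ∀ j, B j ≠ ∞ := fun j => by rw [hB]; dsimp only; rw [hνwuniv j]; exact ENNReal.ofReal_ne_top
  have hA0 : ∀ i ∈ s, A i = 0 → ∀ j ∈ s, t i j = 0 := by
    intro i hi h0 j hj
    have h1 : ENNReal.ofReal (∫ x, φ i x ∂μ) = 0 := by rw [← hμwuniv i]; exact h0
    have hai : ∫ x, φ i x ∂μ ≤ 0 := by simpa [ENNReal.ofReal_eq_zero] using h1
    have hsum : ∑ j' ∈ s, t i j' = ∫ x, φ i x ∂μ := hrow i hi
    have hle : t i j ≤ ∑ j' ∈ s, t i j' := Finset.single_le_sum (fun j' _ => t0 i j') hj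
    have := t0 i j
    linarith
  have hB0 : ∀ j ∈ s, B j = 0 → ∀ i ∈ s, t i j = 0 := by
    intro j hj h0 i hi
    have h1 : ENNReal.ofReal (∫ y, φ j y ∂ν) = 0 := by rw [← hνwuniv j]; exact h0
    have hbj : ∫ y, φ j y ∂ν ≤ 0 := by simpa [ENNReal.ofReal_eq_zero] using h1
    have hsum : ∑ i' ∈ s, t i' j = ∫ y, φ j y ∂ν := hcol j hj
    have hle : t i j ≤ ∑ i' ∈ s, t i' j := Finset.single_le_sum (fun i' _ => t0 i' j) hi
    have := t0 i j
    linarith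
  set c : X → X → ℝ≥0∞ := fun i j => ENNReal.ofReal (t i j) / (A i * B j) with hc
  set γ : Measure (X × X) := ∑ i ∈ s, ∑ j ∈ s, c i j • ((μw i).prod (νw j)) with hγ
  have hcB : ∀ i ∈ s, ∀ j ∈ s, c i j * B j = ENNReal.ofReal (t i j) / A i := by
    intro i hi j hj
    by_cases hB0' : B j = 0
    · have ht' : t i j = 0 := hB0 j hj hB0' i hi
      rw [hB0', ht']
      simp
    · rw [hc]
      dsimp only
      rw [div_eq_mul_inv, mul_right_comm, ← div_eq_mul_inv,
        ENNReal.mul_div_mul_right _ _ hB0' (hBtop j)]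
  have hcA : ∀ i ∈ s, ∀ j ∈ s, c i j * A i = ENNReal.ofReal (t i j) / B j := by
    intro i hi j hj
    by_cases hA0' : A i = 0
    · have ht' : t i j = 0 := hA0 i hi hA0' j hj
      rw [hA0', ht']
      simp
    · rw [hc]
      dsimp only
      rw [mul_comm (A i) (B j), div_eq_mul_inv, mul_right_comm, ← div_eq_mul_inv,
        ENNReal.mul_div_mul_right _ _ hA0' (hAtop i)]
  -- first marginal
  have hfst : ∀ E : Set X, MeasurableSet E → γ (Prod.fst ⁻¹' E) = μ E := by
    intro E hE
    have hpre : (Prod.fst ⁻¹' E : Set (X × X)) = E ×ˢ univ := by ext z; simp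
    rw [hγ, Measure.finset_sum_apply]
    have hterm : ∀ i ∈ s, (∑ j ∈ s, c i j • ((μw i).prod (νw j))) (Prod.fst ⁻¹' E) = μw i E := by
      intro i hi
      rw [Measure.finset_sum_apply]
      have hterm2 : ∀ j ∈ s, (c i j • ((μw i).prod (νw j))) (Prod.fst ⁻¹' E)
          = μw i E * (c i j * B j) := by
        intro j hj
        rw [Measure.smul_apply, hpre, Measure.prod_prod, smul_eq_mul]
        rw [hB]
        ring
      rw [Finset.sum_congr rfl hterm2, ← Finset.mul_sum]
      by_cases hAi : A i = 0
      · have h0 : μw i = 0 := measure_univ_eq_zero.mp hAi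
        rw [h0]
        simp
      · have hone : ∑ j ∈ s, (c i j * B j) = 1 := by
          rw [Finset.sum_congr rfl (hcB i hi)]
          simp only [div_eq_mul_inv]
          rw [← Finset.sum_mul, ← ENNReal.ofReal_sum_of_nonneg (fun j _ => t0 i j), hrow i hi,
            ← hμwuniv i, ← div_eq_mul_inv]
          exact ENNReal.div_self hAi (hAtop i)
        rw [hone, mul_one]
    rw [Finset.sum_congr rfl hterm]
    have hwd : ∀ i ∈ s, μw i E = ∫⁻ x in E, w i x ∂μ := fun i _ => withDensity_apply _ hE
    rw [Finset.sum_congr rfl hwd, ← lintegral_finset_sum s (fun i _ => wmeas i)]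
    have hone : ∀ x : X, ∑ i ∈ s, w i x = 1 := by
      intro x
      rw [hw]
      dsimp only
      rw [← ENNReal.ofReal_sum_of_nonneg (fun i _ => φ0 i x), φsum x, ENNReal.ofReal_one]
    calc ∫⁻ x in E, (∑ i ∈ s, w i x) ∂μ = ∫⁻ x in E, 1 ∂μ := by
          apply lintegral_congr
          intro x
          rw [hone]
      _ = μ E := setLIntegral_one E
  -- second marginal
  have hsnd : ∀ E : Set X, MeasurableSet E → γ (Prod.snd ⁻¹' E) = ν E := by
    intro E hE
    have hpre : (Prod.snd ⁻¹' E : Set (X × X)) = univ ×ˢ E := by ext z; simp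
    rw [hγ, Measure.finset_sum_apply]
    have hterm : ∀ i ∈ s, (∑ j ∈ s, c i j • ((μw i).prod (νw j))) (Prod.snd ⁻¹' E)
        = ∑ j ∈ s, νw j E * (c i j * A i) := by
      intro i hi
      rw [Measure.finset_sum_apply]
      apply Finset.sum_congr rfl
      intro j hj
      rw [Measure.smul_apply, hpre, Measure.prod_prod, smul_eq_mul]
      rw [hA]
      ring
    rw [Finset.sum_congr rfl hterm, Finset.sum_comm]
    have hterm3 : ∀ j ∈ s, ∑ i ∈ s, νw j E * (c i j * A i) = νw j E := by
      intro j hj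
      rw [← Finset.mul_sum]
      by_cases hBj : B j = 0
      · have h0 : νw j = 0 := measure_univ_eq_zero.mp hBj
        rw [h0]
        simp
      · have hone : ∑ i ∈ s, (c i j * A i) = 1 := by
          rw [Finset.sum_congr rfl (fun i hi => hcA i hi j hj)]
          simp only [div_eq_mul_inv]
          rw [← Finset.sum_mul, ← ENNReal.ofReal_sum_of_nonneg (fun i _ => t0 i j), hcol j hj,
            ← hνwuniv j, ← div_eq_mul_inv]
          exact ENNReal.div_self hBj (hBtop j)
        rw [hone, mul_one]
    rw [Finset.sum_congr rfl hterm3]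
    have hwd : ∀ j ∈ s, νw j E = ∫⁻ y in E, w j y ∂ν := fun j _ => withDensity_apply _ hE
    rw [Finset.sum_congr rfl hwd, ← lintegral_finset_sum s (fun j _ => wmeas j)]
    have hone : ∀ y : X, ∑ j ∈ s, w j y = 1 := by
      intro y
      rw [hw]
      dsimp only
      rw [← ENNReal.ofReal_sum_of_nonneg (fun j _ => φ0 j y), φsum y, ENNReal.ofReal_one]
    calc ∫⁻ y in E, (∑ j ∈ s, w j y) ∂ν = ∫⁻ y in E, 1 ∂ν := by
          apply lintegral_congr
          intro y
          rw [hone]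
      _ = ν E := setLIntegral_one E
  have hγprob : IsProbabilityMeasure γ := by
    constructor
    have := hfst univ MeasurableSet.univ
    simpa using this
  have hcoupling : IsCoupling γ μ ν := by
    constructor
    · apply Measure.ext
      intro E hE
      rw [Measure.map_apply measurable_fst hE]
      exact hfst E hE
    · apply Measure.ext
      intro E hE
      rw [Measure.map_apply measurable_snd hE]
      exact hsnd E hE
  -- cost bound
  have hcfin : ∀ i ∈ s, ∀ j ∈ s, c i j ≠ ∞ := by
    intro i hi j hj
    by_cases hAB : A i * B j = 0
    · have ht' : t i j = 0 := by
        rcases mul_eq_zero.mp hAB with h | h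
        · exact hA0 i hi h j hj
        · exact hB0 j hj h i hi
      rw [hc]
      dsimp only
      rw [ht']
      simp
    · exact (ENNReal.div_lt_top ENNReal.ofReal_ne_top hAB).ne
  have hint : ∀ i ∈ s, ∀ j ∈ s,
      Integrable (fun z : X × X => dist z.1 z.2) (c i j • ((μw i).prod (νw j))) := by
    intro i hi j hj
    haveI := hμwfin i
    haveI := hνwfin j
    exact (cont_integrable _ continuous_dist).smul_measure (hcfin i hi j hj)
  have hterm : ∀ i ∈ s, ∀ j ∈ s,
      ∫ z : X × X, dist z.1 z.2 ∂(c i j • ((μw i).prod (νw j))) ≤ t i j * (dist i j + 2 * δ) := by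
    intro i hi j hj
    haveI := hμwfin i
    haveI := hνwfin j
    rw [integral_smul_measure]
    by_cases hAB : A i * B j = 0
    · have ht' : t i j = 0 := by
        rcases mul_eq_zero.mp hAB with h | h
        · exact hA0 i hi h j hj
        · exact hB0 j hj h i hi
      have hc0 : c i j = 0 := by
        rw [hc]
        dsimp only
        rw [ht']
        simp
      rw [hc0, ht']
      simp
    · obtain ⟨hA', hB'⟩ := mul_ne_zero_iff.mp hAB
      have hmeas1 : MeasurableSet {x : X | δ ≤ dist x i} :=
        (isClosed_le continuous_const (continuous_id.dist continuous_const)).measurableSet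
      have hmeas2 : MeasurableSet {y : X | δ ≤ dist y j} :=
        (isClosed_le continuous_const (continuous_id.dist continuous_const)).measurableSet
      have hwz1 : ∀ x : X, x ∈ {x : X | δ ≤ dist x i} → w i x = (fun _ : X => (0:ℝ≥0∞)) x := by
        intro x hx
        have hφx : φ i x = 0 := by
          by_contra hφx
          exact absurd (φsupp i x hφx) (not_lt.mpr hx)
        rw [hw]
        dsimp only
        rw [hφx, ENNReal.ofReal_zero]
      have hN1 : μw i {x : X | δ ≤ dist x i} = 0 := by
        rw [hμw]
        dsimp only
        rw [withDensity_apply _ hmeas1,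
          setLIntegral_congr_fun hmeas1 hwz1, lintegral_zero]
      have hwz2 : ∀ y : X, y ∈ {y : X | δ ≤ dist y j} → w j y = (fun _ : X => (0:ℝ≥0∞)) y := by
        intro y hy
        have hφy : φ j y = 0 := by
          by_contra hφy
          exact absurd (φsupp j y hφy) (not_lt.mpr hy)
        rw [hw]
        dsimp only
        rw [hφy, ENNReal.ofReal_zero]
      have hN2 : νw j {y : X | δ ≤ dist y j} = 0 := by
        rw [hνw]
        dsimp only
        rw [withDensity_apply _ hmeas2,
          setLIntegral_congr_fun hmeas2 hwz2, lintegral_zero]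
      have hae : ∀ᵐ z ∂((μw i).prod (νw j)), dist z.1 i < δ ∧ dist z.2 j < δ := by
        rw [ae_iff]
        have hnull : ((μw i).prod (νw j)) (({x : X | δ ≤ dist x i} ×ˢ univ)
            ∪ (univ ×ˢ {y : X | δ ≤ dist y j})) = 0 :=
          measure_union_null (by rw [Measure.prod_prod, hN1, zero_mul])
            (by rw [Measure.prod_prod, hN2, mul_zero])
        refine measure_mono_null ?_ hnull
        intro z hz
        simp only [mem_setOf_eq, not_and_or, not_lt] at hz
        rcases hz with h | h
        · exact Or.inl ⟨h, trivial⟩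
        · exact Or.inr ⟨trivial, h⟩
      have hae2 : ∀ᵐ z ∂((μw i).prod (νw j)), dist z.1 z.2 ≤ dist i j + 2 * δ := by
        filter_upwards [hae] with z hz
        have htr : dist z.1 z.2 ≤ dist z.1 i + dist i j + dist j z.2 := dist_triangle4 z.1 i j z.2
        have h1 : dist z.1 i < δ := hz.1
        have h2 : dist j z.2 < δ := by rw [dist_comm]; exact hz.2
        linarith
      have hbound : ∫ z : X × X, dist z.1 z.2 ∂((μw i).prod (νw j))
          ≤ (dist i j + 2 * δ) * ((A i) * (B j)).toReal := by
        have hmono := integral_mono_ae (cont_integrable _ continuous_dist)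
          (integrable_const (dist i j + 2 * δ)) hae2
        refine hmono.trans ?_
        rw [integral_const]
        rw [show ((μw i).prod (νw j)).real univ = (A i * B j).toReal from by
          rw [Measure.real, ← univ_prod_univ, Measure.prod_prod]]
        rw [smul_eq_mul]
        ring_nf
        rfl
      have hctor : (c i j).toReal * ((A i) * (B j)).toReal = t i j := by
        rw [hc]
        dsimp only
        rw [ENNReal.toReal_div, ENNReal.toReal_ofReal (t0 i j)]
        rw [div_mul_cancel₀]
        exact ENNReal.toReal_ne_zero.mpr ⟨hAB, ENNReal.mul_ne_top (hAtop i) (hBtop j)⟩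
      calc (c i j).toReal • ∫ z : X × X, dist z.1 z.2 ∂((μw i).prod (νw j))
          ≤ (c i j).toReal * ((dist i j + 2 * δ) * ((A i) * (B j)).toReal) := by
            rw [smul_eq_mul]
            exact mul_le_mul_of_nonneg_left hbound ENNReal.toReal_nonneg
        _ = t i j * (dist i j + 2 * δ) := by rw [← hctor]; ring
  have hcost : ∫ z : X × X, dist z.1 z.2 ∂γ ≤ ∑ i ∈ s, ∑ j ∈ s, t i j * (dist i j + 2 * δ) := by
    rw [hγ]
    rw [integral_finset_sum_measure (fun i hi =>
      integrable_finset_sum_measure.mpr (fun j hj => hint i hi j hj))]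
    apply Finset.sum_le_sum
    intro i hi
    rw [integral_finset_sum_measure (fun j hj => hint i hi j hj)]
    exact Finset.sum_le_sum (fun j hj => hterm i hi j hj)
  exact ⟨γ, hγprob, hcoupling, hcost⟩

def φnC (δ : ℝ) (s : Finset X) (hcov : ∀ x : X, ∃ i ∈ s, dist x i < δ) (i : X) : C(X, ℝ) :=
  ⟨φn δ s i, φn_cont δ s hcov i⟩

@[simp] lemma φnC_apply (δ : ℝ) (s : Finset X) (hcov : ∀ x : X, ∃ i ∈ s, dist x i < δ)
    (i x : X) : φnC δ s hcov i x = φn δ s i x := rfl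

def Φm (δ : ℝ) (s : Finset X) (hcov : ∀ x : X, ∃ i ∈ s, dist x i < δ) (i j : X) :
    C(X × X, ℝ) :=
  ⟨fun z => φn δ s i z.1 * φn δ s j z.2,
    ((φn_cont δ s hcov i).comp continuous_fst).mul ((φn_cont δ s hcov j).comp continuous_snd)⟩

@[simp] lemma Φm_apply (δ : ℝ) (s : Finset X) (hcov : ∀ x : X, ∃ i ∈ s, dist x i < δ)
    (i j : X) (z : X × X) : Φm δ s hcov i j z = φn δ s i z.1 * φn δ s j z.2 := rfl

lemma exists_good_cost (hnt : Nontrivial X) {δ : ℝ} (hδ : 0 < δ) :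
    ∃ cst ∈ Iset μ ν, cst ≤ sSup (Sset μ ν) + 4 * δ := by
  classical
  obtain ⟨Λ, hΛ, hΛD⟩ := exists_functional μ ν hnt
  have hΛdist : Λ (distMap (X := X)) ≤ sSup (Sset μ ν) := by
    have h1 := neg_sSup_le_pfun_negDist μ ν
    rw [← hΛD, map_neg] at h1
    linarith
  obtain ⟨s, hcov⟩ := exists_net (X := X) hδ
  set t : X → X → ℝ := fun i j => Λ (Φm δ s hcov i j) with htdef
  have t0 : ∀ i j, 0 ≤ t i j := fun i j => Λ_nonneg Λ hΛ
    (fun z => mul_nonneg (φn_nonneg δ s hcov i z.1) (φn_nonneg δ s hcov j z.2))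
  have hrow : ∀ i ∈ s, ∑ j ∈ s, t i j = ∫ x, φn δ s i x ∂μ := by
    intro i hi
    have hsum : (∑ j ∈ s, Φm δ s hcov i j) = oplus (φnC δ s hcov i) 0 := by
      ext z
      rw [cmSum_apply]
      have : ∀ j ∈ s, Φm δ s hcov i j z = φn δ s i z.1 * φn δ s j z.2 := fun j _ => rfl
      rw [Finset.sum_congr rfl this, ← Finset.mul_sum, φn_sum_eq_one δ s hcov z.2, mul_one]
      simp [oplus]
    calc ∑ j ∈ s, t i j = Λ (∑ j ∈ s, Φm δ s hcov i j) := (map_sum Λ _ s).symm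
      _ = Λ (oplus (φnC δ s hcov i) 0) := by rw [hsum]
      _ = (∫ x, (φnC δ s hcov i) x ∂μ) + ∫ y, (0 : C(X, ℝ)) y ∂ν := Λ_oplus Λ hΛ _ _
      _ = ∫ x, φn δ s i x ∂μ := by simp
  have hcol : ∀ j ∈ s, ∑ i ∈ s, t i j = ∫ y, φn δ s j y ∂ν := by
    intro j hj
    have hsum : (∑ i ∈ s, Φm δ s hcov i j) = oplus 0 (φnC δ s hcov j) := by
      ext z
      rw [cmSum_apply]
      have : ∀ i ∈ s, Φm δ s hcov i j z = φn δ s i z.1 * φn δ s j z.2 := fun i _ => rfl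
      rw [Finset.sum_congr rfl this, ← Finset.sum_mul, φn_sum_eq_one δ s hcov z.1, one_mul]
      simp [oplus]
    calc ∑ i ∈ s, t i j = Λ (∑ i ∈ s, Φm δ s hcov i j) := (map_sum Λ _ s).symm
      _ = Λ (oplus 0 (φnC δ s hcov j)) := by rw [hsum]
      _ = (∫ x, (0 : C(X, ℝ)) x ∂μ) + ∫ y, (φnC δ s hcov j) y ∂ν := Λ_oplus Λ hΛ _ _
      _ = ∫ y, φn δ s j y ∂ν := by simp
  have hsum1 : ∑ i ∈ s, ∑ j ∈ s, t i j = 1 := by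
    rw [Finset.sum_congr rfl hrow]
    calc ∑ i ∈ s, ∫ x, φn δ s i x ∂μ = ∫ x, ∑ i ∈ s, φn δ s i x ∂μ :=
          (integral_finset_sum s (fun i _ => cont_integrable μ (φn_cont δ s hcov i))).symm
      _ = ∫ _, (1:ℝ) ∂μ := integral_congr_ae (Filter.Eventually.of_forall
          (fun x => φn_sum_eq_one δ s hcov x))
      _ = 1 := by simp
  have hpoint : ∀ z : X × X,
      (∑ i ∈ s, ∑ j ∈ s, (dist i j - 2*δ) • Φm δ s hcov i j) z ≤ distMap (X := X) z := by
    intro z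
    rw [cmSum_apply]
    have heval : ∀ i ∈ s, (∑ j ∈ s, (dist i j - 2*δ) • Φm δ s hcov i j) z
        = ∑ j ∈ s, (dist i j - 2*δ) * (φn δ s i z.1 * φn δ s j z.2) := by
      intro i _
      rw [cmSum_apply]
      apply Finset.sum_congr rfl
      intro j _
      simp [Φm]
    rw [Finset.sum_congr rfl heval]
    have hbound : ∀ i ∈ s, ∀ j ∈ s, (dist i j - 2*δ) * (φn δ s i z.1 * φn δ s j z.2)
        ≤ dist z.1 z.2 * (φn δ s i z.1 * φn δ s j z.2) := by
      intro i _ j _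
      rcases eq_or_ne (φn δ s i z.1 * φn δ s j z.2) 0 with h0 | h0
      · rw [h0, mul_zero, mul_zero]
      · have hφi : φn δ s i z.1 ≠ 0 := left_ne_zero_of_mul h0
        have hφj : φn δ s j z.2 ≠ 0 := right_ne_zero_of_mul h0
        have h1 : dist z.1 i < δ := φn_support δ s i hφi
        have h2 : dist z.2 j < δ := φn_support δ s j hφj
        have htr : dist i j ≤ dist i z.1 + dist z.1 z.2 + dist z.2 j := dist_triangle4 i z.1 z.2 j
        have hcm : dist i z.1 = dist z.1 i := dist_comm i z.1
        have hfac : dist i j - 2*δ ≤ dist z.1 z.2 := by linarith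
        exact mul_le_mul_of_nonneg_right hfac
          (mul_nonneg (φn_nonneg δ s hcov i z.1) (φn_nonneg δ s hcov j z.2))
    calc ∑ i ∈ s, ∑ j ∈ s, (dist i j - 2*δ) * (φn δ s i z.1 * φn δ s j z.2)
        ≤ ∑ i ∈ s, ∑ j ∈ s, dist z.1 z.2 * (φn δ s i z.1 * φn δ s j z.2) :=
          Finset.sum_le_sum (fun i hi => Finset.sum_le_sum (hbound i hi))
      _ = dist z.1 z.2 := by
          have hinner : ∀ i ∈ s, ∑ j ∈ s, dist z.1 z.2 * (φn δ s i z.1 * φn δ s j z.2)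
              = dist z.1 z.2 * φn δ s i z.1 := by
            intro i _
            have : ∀ j ∈ s, dist z.1 z.2 * (φn δ s i z.1 * φn δ s j z.2)
                = (dist z.1 z.2 * φn δ s i z.1) * φn δ s j z.2 := by
              intro j _
              ring
            rw [Finset.sum_congr rfl this, ← Finset.mul_sum, φn_sum_eq_one δ s hcov z.2, mul_one]
          rw [Finset.sum_congr rfl hinner, ← Finset.mul_sum, φn_sum_eq_one δ s hcov z.1, mul_one]
      _ = distMap (X := X) z := rfl
  have hkey : ∑ i ∈ s, ∑ j ∈ s, (dist i j - 2*δ) * t i j ≤ Λ (distMap (X := X)) := by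
    have hlin : Λ (∑ i ∈ s, ∑ j ∈ s, (dist i j - 2*δ) • Φm δ s hcov i j)
        = ∑ i ∈ s, ∑ j ∈ s, (dist i j - 2*δ) * t i j := by
      rw [_root_.map_sum]
      apply Finset.sum_congr rfl
      intro i _
      rw [_root_.map_sum]
      apply Finset.sum_congr rfl
      intro j _
      rw [_root_.map_smul, smul_eq_mul]
    rw [← hlin]
    exact Λ_mono Λ hΛ hpoint
  obtain ⟨γ, hγp, hγc, hγcost⟩ := build_coupling μ ν δ hδ s (φn δ s) (φn_cont δ s hcov)
    (φn_nonneg δ s hcov) (φn_sum_eq_one δ s hcov) (fun i x h => φn_support δ s i h) t t0 hrow hcol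
  refine ⟨_, ⟨γ, hγp, hγc, rfl⟩, ?_⟩
  have expand : ∑ i ∈ s, ∑ j ∈ s, t i j * (dist i j + 2*δ)
      = (∑ i ∈ s, ∑ j ∈ s, (dist i j - 2*δ) * t i j) + 4*δ * (∑ i ∈ s, ∑ j ∈ s, t i j) := by
    rw [Finset.mul_sum, ← Finset.sum_add_distrib]
    apply Finset.sum_congr rfl
    intro i _
    rw [Finset.mul_sum, ← Finset.sum_add_distrib]
    apply Finset.sum_congr rfl
    intro j _
    ring
  rw [expand, hsum1] at hγcost
  linarith

end KRproof

open KRproof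

/-- Kantorovich–Rubinstein duality on a compact metric space: the `1`-Wasserstein
(Earth-Mover) distance equals the supremum of `∫ g dμ - ∫ g dν` over all
`1`-Lipschitz functions `g`. -/
theorem kantorovich_rubinstein {X : Type*} [MetricSpace X] [CompactSpace X]
    [MeasurableSpace X] [BorelSpace X]
    (μ ν : Measure X) [IsProbabilityMeasure μ] [IsProbabilityMeasure ν] :
    wassersteinDist (fun x y => dist x y) 1 μ ν
      = sSup { r : ℝ | ∃ g : X → ℝ, LipschitzWith 1 g ∧
          r = (∫ x, g x ∂μ) - ∫ x, g x ∂ν } := by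
  have hset : { c : ℝ | ∃ γ : Measure (X × X), IsProbabilityMeasure γ ∧ IsCoupling γ μ ν ∧
      c = ∫ z, (fun x y => dist x y) z.1 z.2 ^ (1:ℝ) ∂γ } = KRproof.Iset μ ν := by
    ext c
    simp only [mem_setOf_eq, KRproof.Iset, Real.rpow_one]
  rw [wassersteinDist, hset]
  rw [show (1:ℝ)/1 = 1 by norm_num, Real.rpow_one]
  show sInf (KRproof.Iset μ ν) = sSup (KRproof.Sset μ ν)
  apply le_antisymm
  · rcases subsingleton_or_nontrivial X with hX | hX
    · have h0 : (0:ℝ) ∈ KRproof.Iset μ ν := by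
        refine ⟨μ.prod ν, inferInstance, prod_is_coupling μ ν, ?_⟩
        have hz : ∀ z : X × X, dist z.1 z.2 = 0 := fun z => by
          rw [Subsingleton.elim z.1 z.2, dist_self]
        symm
        calc ∫ z : X × X, dist z.1 z.2 ∂(μ.prod ν) = ∫ _ : X × X, (0:ℝ) ∂(μ.prod ν) :=
              integral_congr_ae (Filter.Eventually.of_forall hz)
          _ = 0 := integral_zero _ _
      calc sInf (KRproof.Iset μ ν) ≤ 0 := csInf_le (bddBelow_Iset μ ν) h0
        _ ≤ sSup (KRproof.Sset μ ν) := le_csSup (bddAbove_Sset μ ν) (zero_mem_Sset μ ν)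
    · apply le_of_forall_pos_le_add
      intro ε hε
      obtain ⟨c, hc, hle⟩ := exists_good_cost μ ν hX (show (0:ℝ) < ε/4 by linarith)
      have h1 := csInf_le (bddBelow_Iset μ ν) hc
      have h2 : sSup (KRproof.Sset μ ν) + 4 * (ε/4) = sSup (KRproof.Sset μ ν) + ε := by ring
      linarith
  · apply le_csInf (Iset_nonempty μ ν)
    intro c hc
    exact csSup_le ⟨0, zero_mem_Sset μ ν⟩ (fun r hr => Sset_le_Iset μ ν r hr c hc)
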